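/- Let F be a free group (or any group) and H a subgroup. Then the closure of H in the pro-abelian topology on F equals the intersection over all primes p and all positive integers k of the closures of H in the pro-Ab(p^k) topologies. -/

import Mathlib

section Aux

variable {F : Type*} [Group F]

/-- Closure characterization for a topology generated by cosets of a family of
subgroups (given by a predicate `P`) containing `⊤` and closed under `⊓`. -/
private lemma mem_closure_cosets {𝒮 : Set (Set F)} {P : Subgroup F → Prop}
    (htop : P ⊤) (hinf : ∀ K₁ K₂, P K₁ → P K₂ → P (K₁ ⊓ K₂))
    (h1 : ∀ T ∈ 𝒮, ∃ K : Subgroup F, P K ∧ ∃ g : F, T = (g * ·) '' (K : Set F))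
    (h2 : ∀ K : Subgroup F, P K → ∀ g : F, (g * ·) '' (K : Set F) ∈ 𝒮)
    (S : Set F) (x : F) :
    x ∈ @closure F (TopologicalSpace.generateFrom 𝒮) S ↔
      ∀ K : Subgroup F, P K → ∃ s ∈ S, x⁻¹ * s ∈ K := by
  letI := TopologicalSpace.generateFrom 𝒮
  rw [mem_closure_iff]
  constructor
  · intro hx K hK
    obtain ⟨s, hso, hsS⟩ := hx ((x * ·) '' (K : Set F))
      (TopologicalSpace.GenerateOpen.basic _ (h2 K hK x)) ⟨1, K.one_mem, mul_one x⟩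
    obtain ⟨k, hk, hks⟩ := hso
    refine ⟨s, hsS, ?_⟩
    have : x⁻¹ * s = k := by rw [← hks]; simp
    rwa [this]
  · intro hx o ho hxo
    have key : ∀ o : Set F, TopologicalSpace.GenerateOpen 𝒮 o → x ∈ o →
        ∃ K : Subgroup F, P K ∧ (x * ·) '' (K : Set F) ⊆ o := by
      intro o ho
      induction ho with
      | basic T hT =>
        intro hxT
        obtain ⟨K, hK, g, rfl⟩ := h1 T hT
        obtain ⟨k, hk, rfl⟩ := hxT
        refine ⟨K, hK, ?_⟩
        rintro _ ⟨k', hk', rfl⟩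
        exact ⟨k * k', K.mul_mem hk hk', (mul_assoc g k k').symm⟩
      | univ => exact fun _ => ⟨⊤, htop, Set.subset_univ _⟩
      | inter o₁ o₂ _ _ ih₁ ih₂ =>
        intro hxo
        obtain ⟨K₁, hK₁, hs₁⟩ := ih₁ hxo.1
        obtain ⟨K₂, hK₂, hs₂⟩ := ih₂ hxo.2
        refine ⟨K₁ ⊓ K₂, hinf _ _ hK₁ hK₂, Set.subset_inter ?_ ?_⟩
        · exact subset_trans
            (Set.image_mono (fun a ha => (Subgroup.mem_inf.mp ha).1)) hs₁
        · exact subset_trans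
            (Set.image_mono (fun a ha => (Subgroup.mem_inf.mp ha).2)) hs₂
      | sUnion 𝒯 _ ih =>
        intro hx'
        obtain ⟨t', ht', hxt'⟩ := hx'
        obtain ⟨K, hK, hs⟩ := ih t' ht' hxt'
        exact ⟨K, hK, hs.trans (Set.subset_sUnion_of_mem ht')⟩
    obtain ⟨K, hK, hs⟩ := key o ho hxo
    obtain ⟨s, hsS, hsK⟩ := hx K hK
    exact ⟨s, hs ⟨x⁻¹ * s, hsK, by simp⟩, hsS⟩

end Aux

/-- The pro-abelian topology on a group `G`: generated by the cosets of the
normal subgroups `K` with `G/K` finite abelian. -/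
def proAbTopology (G : Type*) [Group G] : TopologicalSpace G :=
  TopologicalSpace.generateFrom
    {S : Set G | ∃ K : Subgroup G, K.Normal ∧ K.index ≠ 0 ∧ commutator G ≤ K ∧
      ∃ g : G, S = (g * ·) '' (K : Set G)}

/-- The pro-`Ab(m)` topology on a group `G`: generated by the cosets of the
normal subgroups `K` with `G/K` finite abelian of exponent dividing `m`. -/
def proAbmTopology (G : Type*) [Group G] (m : ℕ) : TopologicalSpace G :=
  TopologicalSpace.generateFrom
    {S : Set G | ∃ K : Subgroup G, K.Normal ∧ K.index ≠ 0 ∧ commutator G ≤ K ∧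
      (∀ g : G, g ^ m ∈ K) ∧ ∃ g : G, S = (g * ·) '' (K : Set G)}

section Aux2

variable {F : Type*} [Group F]

open scoped commutatorElement

private lemma inf_normal {K₁ K₂ : Subgroup F} (h₁ : K₁.Normal) (h₂ : K₂.Normal) :
    (K₁ ⊓ K₂).Normal :=
  ⟨fun m hm g => Subgroup.mem_inf.mpr
    ⟨h₁.conj_mem _ (Subgroup.mem_inf.mp hm).1 g, h₂.conj_mem _ (Subgroup.mem_inf.mp hm).2 g⟩⟩

private lemma mem_proAb_closure (S : Set F) (x : F) :
    x ∈ @closure F (proAbTopology F) S ↔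
      ∀ K : Subgroup F, K.Normal → K.index ≠ 0 → commutator F ≤ K →
        ∃ s ∈ S, x⁻¹ * s ∈ K := by
  rw [proAbTopology,
    mem_closure_cosets (P := fun K : Subgroup F =>
      K.Normal ∧ K.index ≠ 0 ∧ commutator F ≤ K)]
  · constructor
    · exact fun h K h1 h2 h3 => h K ⟨h1, h2, h3⟩
    · exact fun h K hK => h K hK.1 hK.2.1 hK.2.2
  · exact ⟨inferInstance, by simp [Subgroup.index_top], le_top⟩
  · exact fun K₁ K₂ h₁ h₂ => ⟨inf_normal h₁.1 h₂.1,
      Subgroup.index_inf_ne_zero h₁.2.1 h₂.2.1, le_inf h₁.2.2 h₂.2.2⟩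
  · rintro T ⟨K, h1, h2, h3, g, rfl⟩
    exact ⟨K, ⟨h1, h2, h3⟩, g, rfl⟩
  · rintro K ⟨h1, h2, h3⟩ g
    exact ⟨K, h1, h2, h3, g, rfl⟩

private lemma mem_proAbm_closure (m : ℕ) (S : Set F) (x : F) :
    x ∈ @closure F (proAbmTopology F m) S ↔
      ∀ K : Subgroup F, K.Normal → K.index ≠ 0 → commutator F ≤ K →
        (∀ g : F, g ^ m ∈ K) → ∃ s ∈ S, x⁻¹ * s ∈ K := by
  rw [proAbmTopology,
    mem_closure_cosets (P := fun K : Subgroup F =>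
      K.Normal ∧ K.index ≠ 0 ∧ commutator F ≤ K ∧ ∀ g : F, g ^ m ∈ K)]
  · constructor
    · exact fun h K h1 h2 h3 h4 => h K ⟨h1, h2, h3, h4⟩
    · exact fun h K hK => h K hK.1 hK.2.1 hK.2.2.1 hK.2.2.2
  · exact ⟨inferInstance, by simp [Subgroup.index_top], le_top, fun g => Subgroup.mem_top _⟩
  · exact fun K₁ K₂ h₁ h₂ => ⟨inf_normal h₁.1 h₂.1,
      Subgroup.index_inf_ne_zero h₁.2.1 h₂.2.1, le_inf h₁.2.2.1 h₂.2.2.1,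
      fun g => Subgroup.mem_inf.mpr ⟨h₁.2.2.2 g, h₂.2.2.2 g⟩⟩
  · rintro T ⟨K, h1, h2, h3, h4, g, rfl⟩
    exact ⟨K, ⟨h1, h2, h3, h4⟩, g, rfl⟩
  · rintro K ⟨h1, h2, h3, h4⟩ g
    exact ⟨K, h1, h2, h3, h4, g, rfl⟩

/-- The core arithmetic step: membership in all pro-`Ab(p^k)` closures forces
membership in `H·K` for every finite-index normal `K` with abelian quotient. -/
private lemma key_step (H : Subgroup F) (K : Subgroup F) (hN : K.Normal)
    (hi : K.index ≠ 0) (hc : commutator F ≤ K) (x : F)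
    (hx : ∀ p : ℕ, p.Prime → ∀ k : ℕ, 1 ≤ k → ∀ K' : Subgroup F, K'.Normal →
      K'.index ≠ 0 → commutator F ≤ K' → (∀ g : F, g ^ (p ^ k) ∈ K') →
      ∃ h ∈ (H : Set F), x⁻¹ * h ∈ K') :
    ∃ h ∈ (H : Set F), x⁻¹ * h ∈ K := by
  haveI := hN
  set n := K.index with hn
  have hpow : ∀ g : F, g ^ n ∈ K := fun g => K.pow_index_mem g
  let φ : F →* F ⧸ K := QuotientGroup.mk' K
  have hker : ∀ g : F, φ g = 1 ↔ g ∈ K := fun g => QuotientGroup.eq_one_iff g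
  -- the quotient is abelian
  have hcomm : ∀ a b : F ⧸ K, a * b = b * a := by
    intro a b
    obtain ⟨a, rfl⟩ := QuotientGroup.mk_surjective a
    obtain ⟨b, rfl⟩ := QuotientGroup.mk_surjective b
    rw [← QuotientGroup.mk_mul, ← QuotientGroup.mk_mul, QuotientGroup.eq]
    have h1 : (a * b)⁻¹ * (b * a) = ⁅b⁻¹, a⁻¹⁆ := by
      rw [commutatorElement_def]; group
    have h2 : ⁅b⁻¹, a⁻¹⁆ ∈ commutator F := by
      rw [commutator_def]
      exact Subgroup.commutator_mem_commutator (Subgroup.mem_top _) (Subgroup.mem_top _)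
    rw [h1]
    exact hc h2
  -- subgroups of the form {g | g ^ r ∈ K}
  have mkKp : ∀ r : ℕ, ∃ Kp : Subgroup F, ∀ g : F, g ∈ Kp ↔ g ^ r ∈ K := by
    intro r
    refine ⟨{ carrier := {g : F | g ^ r ∈ K}
              one_mem' := by simp [K.one_mem]
              mul_mem' := ?_
              inv_mem' := ?_ }, fun g => Iff.rfl⟩
    · intro a b ha hb
      simp only [Set.mem_setOf_eq] at ha hb ⊢
      rw [← hker]
      calc φ ((a * b) ^ r) = (φ a * φ b) ^ r := by rw [map_pow, map_mul]
        _ = (φ a) ^ r * (φ b) ^ r := Commute.mul_pow (hcomm _ _) r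
        _ = 1 := by
            rw [← map_pow, ← map_pow, (hker _).mpr ha, (hker _).mpr hb, one_mul]
    · intro a ha
      simp only [Set.mem_setOf_eq] at ha ⊢
      rw [inv_pow]
      exact K.inv_mem ha
  -- the image of H in the quotient
  haveI hHN : (H.map φ).Normal := by
    refine ⟨fun m hm g => ?_⟩
    have : g * m * g⁻¹ = m := by rw [hcomm g m, mul_inv_cancel_right]
    rwa [this]
  let ψ : (F ⧸ K) →* (F ⧸ K) ⧸ (H.map φ) := QuotientGroup.mk' (H.map φ)
  set z := ψ (φ x) with hz
  have hz_n : z ^ n = 1 := by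
    rw [hz, ← map_pow, ← map_pow, (hker _).mpr (hpow x), map_one]
  have hz_p : ∀ p ∈ n.primeFactors, z ^ (ordCompl[p] n) = 1 := by
    intro p hp
    obtain ⟨pp, pdvd, hn0⟩ := Nat.mem_primeFactors.mp hp
    set r := ordCompl[p] n with hr
    set k := n.factorization p with hk
    have hk1 : 1 ≤ k := Nat.Prime.factorization_pos_of_dvd pp hn0 pdvd
    obtain ⟨Kp, hKp⟩ := mkKp r
    have hle : K ≤ Kp := fun g hg => (hKp g).mpr (K.pow_mem hg r)
    have hKpN : Kp.Normal := by
      refine ⟨fun m hm g => (hKp _).mpr ?_⟩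
      rw [conj_pow]
      exact hN.conj_mem _ ((hKp m).mp hm) g
    have hKpi : Kp.index ≠ 0 := fun h0 =>
      hi (Nat.eq_zero_of_zero_dvd (h0 ▸ Subgroup.index_dvd_of_le hle))
    have hKpc : commutator F ≤ Kp := le_trans hc hle
    have hKppow : ∀ g : F, g ^ (p ^ k) ∈ Kp := by
      intro g
      refine (hKp _).mpr ?_
      rw [← pow_mul, hk, hr, Nat.ordProj_mul_ordCompl_eq_self n p]
      exact hpow g
    obtain ⟨h, hh, hhk⟩ := hx p pp k hk1 Kp hKpN hKpi hKpc hKppow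
    have h1 : φ ((x⁻¹ * h) ^ r) = 1 := (hker _).mpr ((hKp _).mp hhk)
    have h2 : ((φ x)⁻¹ * φ h) ^ r = 1 := by
      rw [← map_inv, ← map_mul, ← map_pow]; exact h1
    have h3 : (φ x) ^ r = φ (h ^ r) := by
      rw [Commute.mul_pow (hcomm _ _) r, inv_pow, inv_mul_eq_one] at h2
      rw [map_pow, ← h2]
    have h4 : (φ x) ^ r ∈ H.map φ := h3 ▸ ⟨h ^ r, H.pow_mem hh r, rfl⟩
    show ψ (φ x) ^ r = 1
    rw [← map_pow]
    exact (QuotientGroup.eq_one_iff _).mpr h4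
  have hne : n ≠ 0 := hi
  have ho1 : orderOf z = 1 := by
    by_contra h1
    obtain ⟨p, pp, pdvd⟩ := Nat.exists_prime_and_dvd h1
    have hpn : p ∣ n := pdvd.trans (orderOf_dvd_of_pow_eq_one hz_n)
    have hmem : p ∈ n.primeFactors := Nat.mem_primeFactors.mpr ⟨pp, hpn, hne⟩
    have := orderOf_dvd_of_pow_eq_one (hz_p p hmem)
    exact Nat.not_dvd_ordCompl pp hne (pdvd.trans this)
  have hz1 : z = 1 := orderOf_eq_one_iff.mp ho1
  obtain ⟨h, hh, hφ⟩ := (QuotientGroup.eq_one_iff _).mp hz1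
  refine ⟨h, hh, ?_⟩
  rw [← hker, map_mul, map_inv, hφ, inv_mul_cancel]

end Aux2


/-- For a subgroup `H` of a group `F`, the closure of `H` in
the pro-abelian topology equals the intersection, over all primes `p` and all
positive integers `k`, of the closures of `H` in the pro-`Ab(p^k)`
topologies. -/
theorem proAb_closure_eq_iInter_proAbpk_closure (F : Type*) [Group F] (H : Subgroup F) :
    @closure F (proAbTopology F) (H : Set F) =
      ⋂ (p : ℕ) (_ : p.Prime) (k : ℕ) (_ : 1 ≤ k),
        @closure F (proAbmTopology F (p ^ k)) (H : Set F) := by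
  ext x
  simp only [Set.mem_iInter, mem_proAb_closure, mem_proAbm_closure]
  constructor
  · intro hAb p pp k hk K h1 h2 h3 _
    exact hAb K h1 h2 h3
  · intro hAll K h1 h2 h3
    exact key_step H K h1 h2 h3 x (fun p pp k hk K' u1 u2 u3 u4 =>
      hAll p pp k hk K' u1 u2 u3 u4)
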